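/- arXiv:2504.01107 — 3 statements merged into one kernel-verified Lean document; each statement's English description precedes it below -/
import Mathlib

section
/- Let π ∈ S_NC(m₁,…,m_r) and let σ ∈ S_m with σ ≤ π. If the join of the cycle partition of σ with that of γ_{m₁,…,m_r} is the one-block partition 1_m, then σ ∈ S_NC(m₁,…,m_r). -/
open Equiv

namespace ThirdOrderFree

variable {α : Type*}

/-- The setoid whose classes are the cycles (orbits) of a permutation. -/
def sameCycleSetoid (σ : Perm α) : Setoid α :=
  ⟨σ.SameCycle,
    ⟨fun x => Equiv.Perm.SameCycle.refl σ x, fun h => h.symm, fun h h' => h.trans h'⟩⟩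

/-- Number of cycles (orbits, including fixed points) of a permutation. -/
noncomputable def numCycles (σ : Perm α) : ℕ :=
  Nat.card (Quotient (sameCycleSetoid σ))

/-- The length `|σ| = n - #(σ)`. -/
noncomputable def len (σ : Perm α) : ℕ :=
  Nat.card α - numCycles σ

/-- Join of the cycle partitions of two permutations. -/
def joinSetoid (π σ : Perm α) : Setoid α :=
  sameCycleSetoid π ⊔ sameCycleSetoid σ

/-- Number of blocks of `π ∨ σ`. -/
noncomputable def numBlocks (π σ : Perm α) : ℕ :=
  Nat.card (Quotient (joinSetoid π σ))

/-- `π ∨ σ` is the one-block partition. -/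
def JoinTop (π σ : Perm α) : Prop :=
  ∀ x y : α, (joinSetoid π σ).r x y

/-- `π` is a non-crossing (annular) permutation with respect to `γ`. -/
def SNC (γ π : Perm α) : Prop :=
  JoinTop π γ ∧
    numCycles π + numCycles (π⁻¹ * γ) + numCycles γ = Nat.card α + 2

/-- `τ` separates the points of `N`: no cycle of `τ` contains two distinct points of `N`. -/
def Separates (τ : Perm α) (N : Set α) : Prop :=
  ∀ x ∈ N, ∀ y ∈ N, τ.SameCycle x y → x = y

/-- The first-return map of `σ` on the set `{x | p x}`. -/
noncomputable def firstReturn (σ : Perm α) (p : α → Prop) (x : α) : α :=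
  (σ ^ sInf {k : ℕ | 0 < k ∧ p ((σ ^ k) x)}) x

open Classical in
/-- The restriction of `σ` to `{x | p x}`: the unique permutation agreeing with the
first-return map (it exists whenever `α` is finite). -/
noncomputable def restrictPerm (σ : Perm α) (p : α → Prop) : Perm {x // p x} :=
  if h : ∃ e : Perm {x // p x}, ∀ x : {x // p x}, (e x : α) = firstReturn σ p (x : α)
  then h.choose else 1

/-- `π ≤ σ` : each cycle of `π` is contained in a cycle of `σ` and on each cycle of
`σ` the restriction of `π` is a non-crossing permutation of that cycle. -/
def le' (π σ : Perm α) : Prop :=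
  (∀ x y : α, π.SameCycle x y → σ.SameCycle x y) ∧
  ∀ x : α,
    numCycles (restrictPerm π (σ.SameCycle x)) +
      numCycles ((restrictPerm π (σ.SameCycle x))⁻¹ * restrictPerm σ (σ.SameCycle x)) =
      Nat.card {y // σ.SameCycle x y} + 1

/-- `π ≲ σ` : on each block of `π ∨ σ`, `π` is annular non-crossing w.r.t. `σ`. -/
def ncRel (π σ : Perm α) : Prop :=
  ∀ x : α,
    SNC (restrictPerm σ ((joinSetoid π σ).r x)) (restrictPerm π ((joinSetoid π σ).r x))

/-- The permutation of `Σ i, Fin (n i)` rotating each block: the product of the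
directed cycles `T i` of lengths `n i`. -/
def blockRotate {ι : Type*} (n : ι → ℕ) : Perm ((i : ι) × Fin (n i)) :=
  Equiv.sigmaCongrRight fun i => finRotate (n i)

/-- The first elements of the blocks. -/
def zeroSection {ι : Type*} (n : ι → ℕ) (hn : ∀ i, 0 < n i) :
    ι ≃ {x : (i : ι) × Fin (n i) // x.2.val = 0} where
  toFun i := ⟨⟨i, ⟨0, hn i⟩⟩, rfl⟩
  invFun x := x.1.1
  left_inv i := rfl
  right_inv := fun x => by
    obtain ⟨⟨i, j⟩, hj⟩ := x
    exact Subtype.ext (congrArg (Sigma.mk i) (Fin.ext hj.symm))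

/-- `π_{\vec n}` : merge the blocks `T i` along the cycles of `π`; within a block it
moves forward, and the last element of block `i` is sent to the first element of
block `π i`. -/
def mergePerm {ι : Type*} (n : ι → ℕ) (hn : ∀ i, 0 < n i) (π : Perm ι) :
    Perm ((i : ι) × Fin (n i)) :=
  (π.extendDomain (zeroSection n hn)) * blockRotate n


section Aux

variable {β : Type*}

private lemma card_succ_le_of_surj {A B : Type*} [Finite A] (f : A → B)
    (hf : Function.Surjective f) {u v : A} (huv : u ≠ v) (hc : f u = f v) :
    Nat.card B + 1 ≤ Nat.card A := by
  have hB : Finite B := Finite.of_surjective f hf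
  have h1 : Nat.card B ≤ Nat.card A := Nat.card_le_card_of_surjective f hf
  rcases h1.lt_or_eq with h | h
  · omega
  · exact absurd ((((Nat.bijective_iff_surjective_and_card f).mpr ⟨hf, h.symm⟩)).injective hc) huv

private lemma card_le_succ_of_injOff {A B : Type*} [Finite A] [Finite B] (f : A → B) (u : A)
    (h : ∀ x y, x ≠ u → y ≠ u → f x = f y → x = y) :
    Nat.card A ≤ Nat.card B + 1 := by
  classical
  have hinj : Function.Injective
      (fun x : A => if x = u then (none : Option B) else some (f x)) := by
    intro x y hxy
    by_cases hx : x = u <;> by_cases hy : y = u <;> simp [hx, hy] at hxy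
    · exact hx.trans hy.symm
    · exact h x y hx hy hxy
  haveI : Fintype B := Fintype.ofFinite B
  have := Nat.card_le_card_of_injective _ hinj
  simpa [Finite.card_option] using this

private def quotMap {s t : Setoid β} (h : s ≤ t) : Quotient s → Quotient t :=
  Quotient.lift (fun z => Quotient.mk t z) (fun a b hab => Quotient.sound (h hab))

private lemma quotMap_surj {s t : Setoid β} (h : s ≤ t) : Function.Surjective (quotMap h) :=
  fun c => Quotient.inductionOn c (fun z => ⟨Quotient.mk s z, rfl⟩)

private lemma card_quot_le {s t : Setoid β} [Finite β] (h : s ≤ t) :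
    Nat.card (Quotient t) ≤ Nat.card (Quotient s) :=
  Nat.card_le_card_of_surjective _ (quotMap_surj h)

private lemma card_quot_collision {s t : Setoid β} [Finite β] (h : s ≤ t) {a b : β}
    (hs : ¬ s a b) (ht : t a b) :
    Nat.card (Quotient t) + 1 ≤ Nat.card (Quotient s) := by
  refine card_succ_le_of_surj (quotMap h) (quotMap_surj h)
    (u := Quotient.mk s a) (v := Quotient.mk s b) ?_ ?_
  · intro hq; exact hs (Quotient.exact hq)
  · exact Quotient.sound ht

private def pairClosure (s : Setoid β) (a b : β) : Setoid β :=
  ⟨fun x y => s x y ∨ (s x a ∧ s b y) ∨ (s x b ∧ s a y),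
    fun x => Or.inl (s.refl x),
    by
      rintro x y (h | ⟨h1, h2⟩ | ⟨h1, h2⟩)
      · exact Or.inl (s.symm h)
      · exact Or.inr (Or.inr ⟨s.symm h2, s.symm h1⟩)
      · exact Or.inr (Or.inl ⟨s.symm h2, s.symm h1⟩),
    by
      rintro x y z (h | ⟨h1, h2⟩ | ⟨h1, h2⟩) (h' | ⟨h1', h2'⟩ | ⟨h1', h2'⟩)
      · exact Or.inl (s.trans h h')
      · exact Or.inr (Or.inl ⟨s.trans h h1', h2'⟩)
      · exact Or.inr (Or.inr ⟨s.trans h h1', h2'⟩)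
      · exact Or.inr (Or.inl ⟨h1, s.trans h2 h'⟩)
      · exact Or.inl (s.trans (s.trans h1 (s.symm (s.trans h2 h1'))) h2')
      · exact Or.inl (s.trans h1 h2')
      · exact Or.inr (Or.inr ⟨h1, s.trans h2 h'⟩)
      · exact Or.inl (s.trans h1 h2')
      · exact Or.inl (s.trans (s.trans h1 (s.symm (s.trans h2 h1'))) h2')⟩

private lemma le_pairClosure_left {s : Setoid β} {a b : β} : s ≤ pairClosure s a b :=
  fun _ _ h => Or.inl h

private lemma card_le_pairClosure_succ [Finite β] (s : Setoid β) (a b : β) :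
    Nat.card (Quotient s) ≤ Nat.card (Quotient (pairClosure s a b)) + 1 := by
  refine card_le_succ_of_injOff (quotMap (le_pairClosure_left (a := a) (b := b)))
    (Quotient.mk s b) ?_
  intro x y
  induction x using Quotient.inductionOn with | _ x =>
  induction y using Quotient.inductionOn with | _ y =>
  intro hx hy hfxy
  have h1 : (pairClosure s a b) x y := Quotient.exact hfxy
  rcases h1 with h | ⟨h1, h2⟩ | ⟨h1, h2⟩
  · exact Quotient.sound h
  · exact absurd (Quotient.sound (s.symm h2) : Quotient.mk s y = Quotient.mk s b) hy
  · exact absurd (Quotient.sound h1 : Quotient.mk s x = Quotient.mk s b) hx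


private lemma swap_sameCycle_cases [DecidableEq β] {a b x y : β}
    (h : (Equiv.swap a b).SameCycle x y) :
    y = x ∨ (x = a ∧ y = b) ∨ (x = b ∧ y = a) := by
  obtain ⟨k, hk⟩ := h
  have hpow : (Equiv.swap a b) ^ k = 1 ∨ (Equiv.swap a b) ^ k = Equiv.swap a b := by
    rcases Int.even_or_odd k with ⟨n, hn⟩ | ⟨n, hn⟩
    · left
      have : k = 2 * n := by omega
      rw [this, zpow_mul]
      norm_num [zpow_two, pow_two, Equiv.swap_mul_self]
    · right
      rw [hn, zpow_add, zpow_mul]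
      norm_num [zpow_two, pow_two, Equiv.swap_mul_self]
  rcases hpow with hp | hp
  · rw [hp] at hk; left; simpa using hk.symm
  · rw [hp] at hk
    by_cases hxa : x = a
    · subst hxa; rw [Equiv.swap_apply_left] at hk; exact Or.inr (Or.inl ⟨rfl, hk.symm⟩)
    by_cases hxb : x = b
    · subst hxb; rw [Equiv.swap_apply_right] at hk; exact Or.inr (Or.inr ⟨rfl, hk.symm⟩)
    · rw [Equiv.swap_apply_of_ne_of_ne hxa hxb] at hk; exact Or.inl hk.symm

private lemma sameCycle_mul_le [Finite β] {u v : Perm β} {t : Setoid β}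
    (hu : ∀ x y, u.SameCycle x y → t x y) (hv : ∀ x y, v.SameCycle x y → t x y)
    {x y : β} (h : (u * v).SameCycle x y) : t x y := by
  obtain ⟨i, -, rfl⟩ := h.exists_pow_eq'
  clear h
  induction i with
  | zero => simpa using t.refl' x
  | succ k ih =>
    have h1 : ((u * v) ^ (k + 1)) x = u (v (((u * v) ^ k) x)) := by
      rw [pow_succ']; simp [Equiv.Perm.mul_apply]
    rw [h1]
    set w := ((u * v) ^ k) x with hw
    have s1 : v.SameCycle w (v w) := ⟨1, by rw [zpow_one]⟩
    have s2 : u.SameCycle (v w) (u (v w)) := ⟨1, by rw [zpow_one]⟩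
    exact t.trans' (t.trans' ih (hv _ _ s1)) (hu _ _ s2)

private lemma numCycles_conj [Finite β] (c ρ : Perm β) :
    numCycles (c * ρ * c⁻¹) = numCycles ρ := by
  refine Nat.card_congr (Quotient.congr (c⁻¹ : Perm β) ?_)
  intro p q
  constructor
  · rintro ⟨k, hk⟩
    refine ⟨k, ?_⟩
    rw [conj_zpow] at hk
    simp only [Equiv.Perm.mul_apply] at hk
    have := congrArg (fun z => c⁻¹ z) hk
    simpa using this
  · rintro ⟨k, hk⟩
    refine ⟨k, ?_⟩
    rw [conj_zpow]
    simp only [Equiv.Perm.mul_apply]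
    simp only [Equiv.Perm.inv_def]
    have := congrArg (fun z => c z) hk
    simpa using this

private lemma numCycles_mul_comm [Finite β] (u v : Perm β) :
    numCycles (u * v) = numCycles (v * u) := by
  have := numCycles_conj u (v * u)
  rw [show u * (v * u) * u⁻¹ = u * v by group] at this
  exact this


private lemma sameCycle_swap_mul_of_not [Finite β] [DecidableEq β] {a b : β} (hab : a ≠ b)
    {ρ : Perm β} (h : ¬ ρ.SameCycle a b) : (Equiv.swap a b * ρ).SameCycle a b := by
  by_contra H
  have key : ∀ k : ℕ, ((Equiv.swap a b * ρ) ^ k) b = (ρ ^ k) b := by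
    intro k
    induction k with
    | zero => rfl
    | succ k ih =>
      have h1 : ((Equiv.swap a b * ρ) ^ (k + 1)) b = Equiv.swap a b (ρ ((ρ ^ k) b)) := by
        rw [pow_succ']; simp [Equiv.Perm.mul_apply, ih]
      have h2 : (ρ ^ (k + 1)) b = ρ ((ρ ^ k) b) := by
        rw [pow_succ']; simp [Equiv.Perm.mul_apply]
      by_cases hb2 : ρ ((ρ ^ k) b) = b
      · exfalso
        apply H
        have h3 : ((Equiv.swap a b * ρ) ^ (k + 1)) b = a := by
          rw [h1, hb2, Equiv.swap_apply_right]
        exact Equiv.Perm.SameCycle.symm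
          (show (Equiv.swap a b * ρ).SameCycle b a from ⟨(k + 1 : ℕ), by rw [zpow_natCast]; exact h3⟩)
      by_cases ha2 : ρ ((ρ ^ k) b) = a
      · exfalso
        apply h
        exact Equiv.Perm.SameCycle.symm
          (show ρ.SameCycle b a from ⟨(k + 1 : ℕ), by rw [zpow_natCast, h2]; exact ha2⟩)
      · rw [h1, Equiv.swap_apply_of_ne_of_ne ha2 hb2, h2]
  apply H
  have hK : 0 < orderOf ρ := orderOf_pos ρ
  obtain ⟨K, hKe⟩ : ∃ K, orderOf ρ = K + 1 := ⟨orderOf ρ - 1, by omega⟩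
  have h2 : ((Equiv.swap a b * ρ) ^ (orderOf ρ)) b = a := by
    have hfix : ρ ((ρ ^ K) b) = b := by
      have h3 : (ρ ^ (K + 1)) b = b := by rw [← hKe, pow_orderOf_eq_one]; rfl
      rw [pow_succ'] at h3; simpa [Equiv.Perm.mul_apply] using h3
    rw [hKe, pow_succ']
    simp only [Equiv.Perm.mul_apply, key K]
    rw [hfix, Equiv.swap_apply_right]
  exact Equiv.Perm.SameCycle.symm
    (show (Equiv.swap a b * ρ).SameCycle b a from ⟨(orderOf ρ : ℤ), by rw [zpow_natCast]; exact h2⟩)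

private lemma not_sameCycle_swap_mul [Finite β] [DecidableEq β] {a b : β} (hab : a ≠ b)
    {ρ : Perm β} (h : ρ.SameCycle a b) : ¬ (Equiv.swap a b * ρ).SameCycle a b := by
  intro H
  classical
  obtain ⟨i0, hi0pos, -, hi0⟩ := h.exists_pow_eq''
  have hex : ∃ j, 0 < j ∧ (ρ ^ j) a = b := ⟨i0, hi0pos, hi0⟩
  obtain ⟨hjpos, hjb⟩ := Nat.find_spec hex
  set j := Nat.find hex with hjdef
  have hmin : ∀ m, m < j → ¬ (0 < m ∧ (ρ ^ m) a = b) := fun m hm => Nat.find_min hex hm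
  have hja : ∀ m, 0 < m → m < j → (ρ ^ m) a ≠ a := by
    intro m hm0 hmj hma
    have h1 : (ρ ^ (j - m)) a = b := by
      have h2 : (ρ ^ ((j - m) + m)) a = b := by rw [Nat.sub_add_cancel hmj.le]; exact hjb
      rw [pow_add] at h2
      simpa [Equiv.Perm.mul_apply, hma] using h2
    exact hmin (j - m) (by omega) ⟨by omega, h1⟩
  have hjb' : ∀ m, m < j → (ρ ^ m) a ≠ b := by
    intro m hmj
    rcases Nat.eq_zero_or_pos m with rfl | hm0
    · simpa using hab
    · intro hmb; exact hmin m hmj ⟨hm0, hmb⟩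
  have key : ∀ k : ℕ, ((Equiv.swap a b * ρ) ^ k) a = (ρ ^ (k % j)) a := by
    intro k
    induction k with
    | zero => simp
    | succ k ih =>
      have hlt : k % j < j := Nat.mod_lt _ hjpos
      have h1 : ((Equiv.swap a b * ρ) ^ (k + 1)) a = Equiv.swap a b ((ρ ^ (k % j + 1)) a) := by
        rw [pow_succ']
        simp only [Equiv.Perm.mul_apply, ih]
        congr 1
        rw [pow_succ']; simp [Equiv.Perm.mul_apply]
      by_cases hc : k % j + 1 = j
      · have hd : j ∣ (k + 1) := by
          refine ⟨k / j + 1, ?_⟩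
          have h2 := Nat.div_add_mod k j
          have h3 : j * (k / j + 1) = j * (k / j) + j := by ring
          omega
        have hmod : (k + 1) % j = 0 := Nat.dvd_iff_mod_eq_zero.mp hd
        rw [h1, hc, hjb, Equiv.swap_apply_right, hmod]
        simp
      · have hlt2 : k % j + 1 < j := by omega
        have hmod : (k + 1) % j = k % j + 1 := by
          conv_lhs => rw [← Nat.div_add_mod k j]
          rw [show j * (k / j) + k % j + 1 = (k % j + 1) + j * (k / j) by ring,
            Nat.add_mul_mod_self_left]
          exact Nat.mod_eq_of_lt hlt2
        rw [h1, Equiv.swap_apply_of_ne_of_ne (hja _ (by omega) hlt2) (hjb' _ hlt2), hmod]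
  obtain ⟨i, -, hi⟩ := H.exists_pow_eq'
  have hk := key i
  rw [hi] at hk
  exact hjb' (i % j) (Nat.mod_lt _ hjpos) hk.symm


private lemma numCycles_swap_mul_le [Finite β] [DecidableEq β] (a b : β) (ρ : Perm β) :
    numCycles (Equiv.swap a b * ρ) ≤ numCycles ρ + 1 := by
  have h1 : sameCycleSetoid ρ ≤ pairClosure (sameCycleSetoid (Equiv.swap a b * ρ)) a b := by
    intro x y hxy
    have hxy' : (Equiv.swap a b * (Equiv.swap a b * ρ)).SameCycle x y := by
      rwa [Equiv.swap_mul_self_mul]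
    refine sameCycle_mul_le ?_ (fun _ _ h' => Or.inl h') hxy'
    intro p q hpq
    rcases swap_sameCycle_cases hpq with rfl | ⟨rfl, rfl⟩ | ⟨rfl, rfl⟩
    · exact (pairClosure _ a b).refl' _
    · exact Or.inr (Or.inl ⟨Equiv.Perm.SameCycle.refl _ _, Equiv.Perm.SameCycle.refl _ _⟩)
    · exact Or.inr (Or.inr ⟨Equiv.Perm.SameCycle.refl _ _, Equiv.Perm.SameCycle.refl _ _⟩)
  have h2 := card_le_pairClosure_succ (sameCycleSetoid (Equiv.swap a b * ρ)) a b
  have h3 := card_quot_le h1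
  calc numCycles (Equiv.swap a b * ρ)
      ≤ Nat.card (Quotient (pairClosure (sameCycleSetoid (Equiv.swap a b * ρ)) a b)) + 1 := h2
    _ ≤ numCycles ρ + 1 := by exact Nat.add_le_add_right h3 1

private lemma numCycles_swap_mul_of_sameCycle [Finite β] [DecidableEq β] {a b : β} (hab : a ≠ b)
    {ρ : Perm β} (h : ρ.SameCycle a b) :
    numCycles (Equiv.swap a b * ρ) = numCycles ρ + 1 := by
  refine le_antisymm (numCycles_swap_mul_le a b ρ) ?_
  unfold numCycles
  refine card_quot_collision (s := sameCycleSetoid (Equiv.swap a b * ρ))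
    (t := sameCycleSetoid ρ) (a := a) (b := b) ?_ ?_ ?_
  · intro x y hxy
    refine sameCycle_mul_le ?_ (fun _ _ h' => h') hxy
    intro p q hpq
    rcases swap_sameCycle_cases hpq with rfl | ⟨rfl, rfl⟩ | ⟨rfl, rfl⟩
    · exact Equiv.Perm.SameCycle.refl _ _
    · exact h
    · exact h.symm
  · exact not_sameCycle_swap_mul hab h
  · exact h

private lemma numCycles_eq_swap_mul_succ [Finite β] [DecidableEq β] {a b : β} (hab : a ≠ b)
    {ρ : Perm β} (h : ¬ ρ.SameCycle a b) :
    numCycles ρ = numCycles (Equiv.swap a b * ρ) + 1 := by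
  have hM1 := sameCycle_swap_mul_of_not hab h
  refine le_antisymm ?_ ?_
  · have h2 := numCycles_swap_mul_le a b (Equiv.swap a b * ρ)
    rwa [Equiv.swap_mul_self_mul] at h2
  · unfold numCycles
    refine card_quot_collision (s := sameCycleSetoid ρ)
      (t := sameCycleSetoid (Equiv.swap a b * ρ)) (a := a) (b := b) ?_ h hM1
    intro x y hxy
    have hxy' : (Equiv.swap a b * (Equiv.swap a b * ρ)).SameCycle x y := by
      rwa [Equiv.swap_mul_self_mul]
    refine sameCycle_mul_le ?_ (fun _ _ h' => h') hxy'
    intro p q hpq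
    rcases swap_sameCycle_cases hpq with rfl | ⟨rfl, rfl⟩ | ⟨rfl, rfl⟩
    · exact Equiv.Perm.SameCycle.refl _ _
    · exact hM1
    · exact hM1.symm

private lemma numCycles_mul_swap_le [Finite β] [DecidableEq β] (a b : β) (ρ : Perm β) :
    numCycles (ρ * Equiv.swap a b) ≤ numCycles ρ + 1 := by
  rw [numCycles_mul_comm]; exact numCycles_swap_mul_le a b ρ

private lemma numCycles_eq_mul_swap_succ [Finite β] [DecidableEq β] {a b : β} (hab : a ≠ b)
    {ρ : Perm β} (h : ¬ ρ.SameCycle a b) :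
    numCycles ρ = numCycles (ρ * Equiv.swap a b) + 1 := by
  rw [numCycles_mul_comm]; exact numCycles_eq_swap_mul_succ hab h

private lemma numCycles_le_card [Finite β] (ρ : Perm β) : numCycles ρ ≤ Nat.card β :=
  Nat.card_le_card_of_surjective (Quotient.mk (sameCycleSetoid ρ))
    (fun c => ⟨c.out, Quotient.out_eq c⟩)

private lemma numCycles_one [Finite β] : numCycles (1 : Perm β) = Nat.card β := by
  symm
  refine Nat.card_eq_of_bijective (Quotient.mk (sameCycleSetoid (1 : Perm β))) ⟨?_, ?_⟩
  · intro z w hzw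
    obtain ⟨k, hk⟩ : (1 : Perm β).SameCycle z w := Quotient.exact hzw
    simpa using hk
  · exact fun c => ⟨c.out, Quotient.out_eq c⟩

private lemma eq_one_of_numCycles_eq [Finite β] {ρ : Perm β} (h : numCycles ρ = Nat.card β) :
    ρ = 1 := by
  have hsurj : Function.Surjective (Quotient.mk (sameCycleSetoid ρ)) :=
    fun c => ⟨c.out, Quotient.out_eq c⟩
  have hbij : Function.Bijective (Quotient.mk (sameCycleSetoid ρ)) :=
    (Nat.bijective_iff_surjective_and_card _).mpr ⟨hsurj, h.symm⟩
  ext z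
  have h2 : Quotient.mk (sameCycleSetoid ρ) (ρ z) = Quotient.mk (sameCycleSetoid ρ) z :=
    Quotient.sound (Equiv.Perm.SameCycle.symm ⟨1, by rw [zpow_one]⟩)
  simpa using hbij.injective h2


private lemma exists_ne_of_ne_one {y : Perm β} (hy : y ≠ 1) : ∃ a, y a ≠ a := by
  by_contra hc
  push_neg at hc
  exact hy (Equiv.ext fun z => by simp [hc z])

private lemma triangle [Finite β] [DecidableEq β] (x y : Perm β) :
    numCycles x + numCycles y ≤ Nat.card β + numCycles (x * y) := by
  suffices H : ∀ (k : ℕ) (y x : Perm β), Nat.card β - numCycles y ≤ k →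
      numCycles x + numCycles y ≤ Nat.card β + numCycles (x * y) from H _ y x le_rfl
  intro k
  induction k with
  | zero =>
    intro y x hk
    have h0 := numCycles_le_card y
    have h1 : numCycles y = Nat.card β := by omega
    obtain rfl : y = 1 := eq_one_of_numCycles_eq h1
    rw [mul_one, numCycles_one]
    omega
  | succ k ih =>
    intro y x hk
    by_cases hy : y = 1
    · subst hy; rw [mul_one, numCycles_one]; omega
    · obtain ⟨a, ha⟩ := exists_ne_of_ne_one hy
      have hab : a ≠ y a := fun h => ha h.symm
      have hSC : y.SameCycle a (y a) := ⟨1, by rw [zpow_one]⟩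
      have hsplit : numCycles (Equiv.swap a (y a) * y) = numCycles y + 1 :=
        numCycles_swap_mul_of_sameCycle hab hSC
      have hylt : numCycles y < Nat.card β := by
        rcases (numCycles_le_card y).lt_or_eq with h | h
        · exact h
        · exact absurd (eq_one_of_numCycles_eq h) hy
      have hIH := ih (Equiv.swap a (y a) * y) (x * Equiv.swap a (y a)) (by omega)
      have hxx : numCycles x ≤ numCycles (x * Equiv.swap a (y a)) + 1 := by
        have h2 := numCycles_mul_swap_le a (y a) (x * Equiv.swap a (y a))
        rwa [mul_assoc, Equiv.swap_mul_self, mul_one] at h2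
      rw [show x * Equiv.swap a (y a) * (Equiv.swap a (y a) * y) = x * y by
        rw [mul_assoc, Equiv.swap_mul_self_mul]] at hIH
      omega

private lemma sameCycleSetoid_one : sameCycleSetoid (1 : Perm β) = ⊥ := by
  ext p q
  constructor
  · rintro ⟨k, hk⟩
    have : p = q := by simpa using hk
    rw [Setoid.bot_def]
    exact this
  · intro h
    rw [Setoid.bot_def] at h
    subst h
    exact Equiv.Perm.SameCycle.refl _ _

private lemma genus_base [Finite β] (x : Perm β) :
    numCycles x + numCycles (1 : Perm β) + numCycles (x * 1) ≤
      Nat.card β + 2 * Nat.card (Quotient (joinSetoid x 1)) := by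
  have hJ : joinSetoid x 1 = sameCycleSetoid x := by
    unfold joinSetoid
    rw [sameCycleSetoid_one, sup_bot_eq]
  rw [hJ, mul_one, numCycles_one]
  have : Nat.card (Quotient (sameCycleSetoid x)) = numCycles x := rfl
  omega

private lemma genus_ineq [Finite β] [DecidableEq β] (x y : Perm β) :
    numCycles x + numCycles y + numCycles (x * y) ≤
      Nat.card β + 2 * Nat.card (Quotient (joinSetoid x y)) := by
  suffices H : ∀ (k : ℕ) (y x : Perm β), Nat.card β - numCycles y ≤ k →
      numCycles x + numCycles y + numCycles (x * y) ≤
        Nat.card β + 2 * Nat.card (Quotient (joinSetoid x y)) from H _ y x le_rfl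
  intro k
  induction k with
  | zero =>
    intro y x hk
    have h0 := numCycles_le_card y
    have h1 : numCycles y = Nat.card β := by omega
    obtain rfl : y = 1 := eq_one_of_numCycles_eq h1
    exact genus_base x
  | succ k ih =>
    intro y x hk
    by_cases hy : y = 1
    · subst hy; exact genus_base x
    · obtain ⟨a, ha⟩ := exists_ne_of_ne_one hy
      set b := y a with hbdef
      have hab : a ≠ b := fun h => ha h.symm
      have hSC : y.SameCycle a b := ⟨1, by rw [zpow_one]⟩
      set τ := Equiv.swap a b with hτ
      set x' := x * τ with hx'
      set y' := τ * y with hy'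
      have hsplit : numCycles y' = numCycles y + 1 :=
        numCycles_swap_mul_of_sameCycle hab hSC
      have hylt : numCycles y < Nat.card β := by
        rcases (numCycles_le_card y).lt_or_eq with h | h
        · exact h
        · exact absurd (eq_one_of_numCycles_eq h) hy
      have hIH := ih y' x' (by omega)
      have hxeq : x' * τ = x := by rw [hx', mul_assoc, Equiv.swap_mul_self, mul_one]
      have hprod : x' * y' = x * y := by rw [hx', hy', mul_assoc, Equiv.swap_mul_self_mul]
      rw [hprod] at hIH
      set J := joinSetoid x y with hJ
      set J' := joinSetoid x' y' with hJ'
      set PC := pairClosure J' a b with hPC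
      have hτPC : ∀ p q : β, τ.SameCycle p q → PC p q := by
        intro p q hpq
        rcases swap_sameCycle_cases hpq with rfl | ⟨rfl, rfl⟩ | ⟨rfl, rfl⟩
        · exact PC.refl' _
        · exact Or.inr (Or.inl ⟨J'.refl' _, J'.refl' _⟩)
        · exact Or.inr (Or.inr ⟨J'.refl' _, J'.refl' _⟩)
      have hx'J' : sameCycleSetoid x' ≤ J' := le_sup_left
      have hy'J' : sameCycleSetoid y' ≤ J' := le_sup_right
      have hxle : ∀ p q : β, x.SameCycle p q → PC p q := by
        intro p q hpq
        have hpq' : (x' * τ).SameCycle p q := by rwa [hxeq]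
        exact sameCycle_mul_le (fun u v h' => le_pairClosure_left (hx'J' h')) hτPC hpq'
      have hyle : ∀ p q : β, y.SameCycle p q → PC p q := by
        intro p q hpq
        have hpq' : (τ * y').SameCycle p q := by
          rw [hy', Equiv.swap_mul_self_mul]; exact hpq
        exact sameCycle_mul_le hτPC (fun u v h' => le_pairClosure_left (hy'J' h')) hpq'
      have hJPC : J ≤ PC := sup_le (fun p q h' => hxle p q h') (fun p q h' => hyle p q h')
      have hxx : numCycles x ≤ numCycles x' + 1 := by
        have h2 := numCycles_mul_swap_le a b x'
        rwa [hxeq] at h2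
      by_cases hcase : J' a b
      · have hPCJ' : PC ≤ J' := by
          rintro p q (h' | ⟨h1, h2⟩ | ⟨h1, h2⟩)
          · exact h'
          · exact J'.trans' (J'.trans' h1 hcase) h2
          · exact J'.trans' (J'.trans' h1 (J'.symm' hcase)) h2
        have hblocks : Nat.card (Quotient J') ≤ Nat.card (Quotient J) :=
          card_quot_le (le_trans hJPC hPCJ')
        omega
      · have hnx' : ¬ x'.SameCycle a b := fun h' => hcase (hx'J' h')
        have hmerge : numCycles x' = numCycles x + 1 := by
          have h2 := numCycles_eq_mul_swap_succ hab hnx'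
          rwa [hxeq] at h2
        have hb1 : Nat.card (Quotient PC) ≤ Nat.card (Quotient J) := card_quot_le hJPC
        have hb2 : Nat.card (Quotient J') ≤ Nat.card (Quotient PC) + 1 :=
          card_le_pairClosure_succ J' a b
        omega


private lemma restrictPerm_eq {σ : Perm β} {p : β → Prop} (hp : ∀ x, p (σ x) ↔ p x) :
    restrictPerm σ p = σ.subtypePerm hp := by
  have hfr : ∀ x : {x // p x}, firstReturn σ p (x : β) = σ (x : β) := by
    intro x
    have h1 : (1 : ℕ) ∈ {k : ℕ | 0 < k ∧ p ((σ ^ k) (x : β))} :=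
      ⟨one_pos, by simpa using (hp _).2 x.2⟩
    have h2 : sInf {k : ℕ | 0 < k ∧ p ((σ ^ k) (x : β))} = 1 :=
      le_antisymm (Nat.sInf_le h1) (Nat.sInf_mem ⟨1, h1⟩).1
    rw [firstReturn, h2, pow_one]
  have hex : ∃ e : Perm {x // p x}, ∀ x : {x // p x}, (e x : β) = firstReturn σ p (x : β) :=
    ⟨σ.subtypePerm hp, fun x => (hfr x).symm⟩
  rw [restrictPerm, dif_pos hex]
  refine Equiv.ext fun z => ?_
  exact Subtype.ext ((hex.choose_spec z).trans (hfr z))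

private lemma sameCycle_subtypePerm_iff {σ : Perm β} {p : β → Prop} (hp : ∀ x, p (σ x) ↔ p x)
    {z w : {x // p x}} : (σ.subtypePerm hp).SameCycle z w ↔ σ.SameCycle (z : β) (w : β) := by
  constructor
  · rintro ⟨k, hk⟩
    refine ⟨k, ?_⟩
    rw [← hk, Equiv.Perm.subtypePerm_zpow]
    rfl
  · rintro ⟨k, hk⟩
    refine ⟨k, ?_⟩
    rw [Equiv.Perm.subtypePerm_zpow]
    exact Subtype.ext hk


private lemma le'_count [Finite β] {σ π : Perm β} (h : le' σ π) :
    numCycles σ + numCycles (σ⁻¹ * π) = Nat.card β + numCycles π := by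
  classical
  haveI : Fintype β := Fintype.ofFinite β
  obtain ⟨hle, hcross⟩ := h
  set ρ := σ⁻¹ * π with hρ
  have hρle : ∀ p q : β, ρ.SameCycle p q → π.SameCycle p q := by
    intro p q hpq
    refine sameCycle_mul_le (t := sameCycleSetoid π) ?_ (fun _ _ h' => h') hpq
    intro p q hpq
    exact hle p q (Equiv.Perm.sameCycle_inv.mp hpq)
  have hσle : ∀ p q : β, σ.SameCycle p q → π.SameCycle p q := hle
  have hinv : ∀ (u : Perm β), (∀ p q : β, u.SameCycle p q → π.SameCycle p q) →
      ∀ (x0 z : β), π.SameCycle x0 (u z) ↔ π.SameCycle x0 z := by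
    intro u hu x0 z
    have h1 : π.SameCycle z (u z) := hu _ _ ⟨1, by rw [zpow_one]⟩
    exact ⟨fun h2 => h2.trans h1.symm, fun h2 => h2.trans h1⟩
  set Q := Quotient (sameCycleSetoid π) with hQ
  haveI : Fintype Q := Fintype.ofFinite Q
  -- general counting: a perm refining the cycles of π
  have main : ∀ (u : Perm β) (hu : ∀ p q : β, u.SameCycle p q → π.SameCycle p q),
      numCycles u = ∑ c : Q, numCycles (u.subtypePerm (hinv u hu c.out)) := by
    intro u hu
    haveI : Fintype (Quotient (sameCycleSetoid u)) := Fintype.ofFinite _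
    set F : Quotient (sameCycleSetoid u) → Q :=
      Quotient.lift (fun z => (Quotient.mk (sameCycleSetoid π) z : Q))
        (fun p q hpq => Quotient.sound (hu p q hpq)) with hF
    have h1 : numCycles u = ∑ c : Q, Nat.card {d : Quotient (sameCycleSetoid u) // F d = c} := by
      have he := Nat.card_congr (Equiv.sigmaFiberEquiv F)
      unfold numCycles
      rw [← he, Nat.card_eq_fintype_card, Fintype.card_sigma]
      simp [Nat.card_eq_fintype_card]
    rw [h1]
    refine Finset.sum_congr rfl fun c _ => ?_
    -- fiber over c ≃ cycles of u restricted to the class of c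
    set pinv := hinv u hu c.out with hpinv
    have hproof : ∀ z : {w // π.SameCycle c.out w},
        F (Quotient.mk (sameCycleSetoid u) (z : β)) = c :=
      fun z => (Quotient.sound z.2).symm.trans (Quotient.out_eq c)
    set e : Quotient (sameCycleSetoid (u.subtypePerm pinv)) →
        {d : Quotient (sameCycleSetoid u) // F d = c} :=
      Quotient.lift
        (fun z : {w // π.SameCycle c.out w} =>
          (⟨Quotient.mk (sameCycleSetoid u) (z : β), hproof z⟩ :
            {d : Quotient (sameCycleSetoid u) // F d = c}))
        (fun z w hzw =>
          Subtype.ext (Quotient.sound ((sameCycle_subtypePerm_iff pinv).mp hzw))) with he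
    have hbij : Function.Bijective e := by
      constructor
      · intro d1 d2
        induction d1 using Quotient.inductionOn with | _ z =>
        induction d2 using Quotient.inductionOn with | _ w =>
        intro hzw
        have h2 : Quotient.mk (sameCycleSetoid u) (z : β) =
            Quotient.mk (sameCycleSetoid u) (w : β) := congrArg Subtype.val hzw
        exact Quotient.sound ((sameCycle_subtypePerm_iff pinv).mpr (Quotient.exact h2))
      · rintro ⟨d, hd⟩
        induction d using Quotient.inductionOn with | _ z =>
        have hz : π.SameCycle c.out z := by
          have h3 : Quotient.mk (sameCycleSetoid π) c.out = Quotient.mk (sameCycleSetoid π) z :=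
            (Quotient.out_eq c).trans hd.symm
          exact Quotient.exact h3
        exact ⟨Quotient.mk (sameCycleSetoid (u.subtypePerm pinv)) ⟨z, hz⟩, Subtype.ext rfl⟩
    exact (Nat.card_eq_of_bijective e hbij).symm
  have hcardeq : Nat.card β = ∑ c : Q, Nat.card {z : β // π.SameCycle c.out z} := by
    have he := Nat.card_congr
      (Equiv.sigmaFiberEquiv (fun z : β => (Quotient.mk (sameCycleSetoid π) z : Q)))
    rw [← he, Nat.card_eq_fintype_card, Fintype.card_sigma]
    refine Finset.sum_congr rfl fun c _ => ?_
    rw [← Nat.card_eq_fintype_card]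
    refine Nat.card_congr (Equiv.subtypeEquivRight fun z => ?_)
    constructor
    · intro h'
      exact Quotient.exact ((Quotient.out_eq c).trans h'.symm)
    · intro h'
      exact (Quotient.sound h').symm.trans (Quotient.out_eq c)
  have hπcount : numCycles π = ∑ c : Q, 1 := by
    unfold numCycles
    rw [Nat.card_eq_fintype_card]
    simp
    exact Fintype.card_congr' rfl
  have hperc : ∀ c : Q,
      numCycles (σ.subtypePerm (hinv σ hσle c.out)) +
        numCycles (ρ.subtypePerm (hinv ρ hρle c.out)) =
      Nat.card {z : β // π.SameCycle c.out z} + 1 := by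
    intro c
    have h2 := hcross c.out
    rw [restrictPerm_eq (hinv σ hσle c.out),
      restrictPerm_eq (hinv π (fun _ _ h' => h') c.out)] at h2
    have h3 : (σ.subtypePerm (hinv σ hσle c.out))⁻¹ *
        π.subtypePerm (hinv π (fun _ _ h' => h') c.out) =
        ρ.subtypePerm (hinv ρ hρle c.out) := by
      refine Equiv.ext fun z => Subtype.ext ?_
      simp [hρ, Equiv.Perm.mul_apply]
      rfl
    rw [h3] at h2
    exact h2
  rw [main σ hσle, main ρ hρle, hcardeq, hπcount, ← Finset.sum_add_distrib,
    ← Finset.sum_add_distrib]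
  exact Finset.sum_congr rfl fun c _ => hperc c

end Aux

/-- if `π ∈ S_NC(m₁,…,m_r)`, `σ ≤ π` and `σ ∨ γ = 1`, then
`σ ∈ S_NC(m₁,…,m_r)`. -/
theorem stmt7 {r : ℕ} (m : Fin r → ℕ)
    (γ : Equiv.Perm ((i : Fin r) × Fin (m i))) (hγ : γ = blockRotate m)
    (π σ : Equiv.Perm ((i : Fin r) × Fin (m i)))
    (hπ : SNC γ π) (hσ : le' σ π) (hjoin : JoinTop σ γ) :
    SNC γ σ := by
  classical
  obtain ⟨hπjoin, hπeq⟩ := hπ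
  refine ⟨hjoin, ?_⟩
  by_cases hne : Nonempty ((i : Fin r) × Fin (m i))
  · -- main case
    have hprod : σ * (σ⁻¹ * γ) = γ := by group
    have hjle : joinSetoid σ γ ≤ joinSetoid σ (σ⁻¹ * γ) := by
      refine sup_le le_sup_left ?_
      intro p q hpq
      have h' : (σ * (σ⁻¹ * γ)).SameCycle p q := by rwa [hprod]
      exact sameCycle_mul_le (t := joinSetoid σ (σ⁻¹ * γ))
        (fun _ _ hh => (le_sup_left : sameCycleSetoid σ ≤ _) hh)
        (fun _ _ hh => (le_sup_right : sameCycleSetoid (σ⁻¹ * γ) ≤ _) hh) h'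
    have hj1 : Nat.card (Quotient (joinSetoid σ (σ⁻¹ * γ))) = 1 := by
      haveI : Nonempty (Quotient (joinSetoid σ (σ⁻¹ * γ))) :=
        Nonempty.map (Quotient.mk _) hne
      haveI : Subsingleton (Quotient (joinSetoid σ (σ⁻¹ * γ))) := by
        constructor
        intro c d
        induction c using Quotient.inductionOn with | _ p =>
        induction d using Quotient.inductionOn with | _ q =>
        exact Quotient.sound (hjle (hjoin p q))
      exact Nat.card_unique
    have hup : numCycles σ + numCycles (σ⁻¹ * γ) + numCycles γ ≤
        Nat.card ((i : Fin r) × Fin (m i)) + 2 := by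
      have hG := genus_ineq σ (σ⁻¹ * γ)
      rw [hprod, hj1] at hG
      omega
    have hcount := le'_count hσ
    have htri := triangle (σ⁻¹ * π) (π⁻¹ * γ)
    rw [show (σ⁻¹ * π) * (π⁻¹ * γ) = σ⁻¹ * γ by group] at htri
    omega
  · -- empty case: contradiction with hπeq
    exfalso
    haveI : IsEmpty ((i : Fin r) × Fin (m i)) := not_nonempty_iff.mp hne
    have hcard : Nat.card ((i : Fin r) × Fin (m i)) = 0 := Nat.card_of_isEmpty
    have h1 := numCycles_le_card π
    have h2 := numCycles_le_card (π⁻¹ * γ)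
    have h3 := numCycles_le_card γ
    omega

end ThirdOrderFree
end

section
/- Fix positive integers n₁,…,n_{r+s+t} and let n = Σnᵢ, N = {n₁, n₁+n₂, …, n}. Let γ ∈ S_n be the product of r+s+t consecutive cycles T_i of lengths n_i, and for π ∈ S_{r+s+t} let π_⃗n ∈ S_n be defined by π_⃗n(i) = γ(i) if i ∉ N, and π_⃗n(n₁+⋯+n_j) = n₁+⋯+n_{π(j)−1}+1. Let ψ : [r+s+t] → [n], ψ(i) = n₁+⋯+n_i. Then: (1) ψ ∘ (π⁻¹γ_{r,s,t}) = (π_⃗n⁻¹ γ_{p,q,l}) ∘ ψ; (2) #(π) = #(π_⃗n) and #(π⁻¹γ_{r,s,t}) + (p+q+l) = #(π_⃗n⁻¹γ_{p,q,l}) + (r+s+t); (3) if π ∈ S_NC(r,s,t) then π_⃗n ∈ S_NC(p,q,l), where p = n₁+⋯+n_r, q = n_{r+1}+⋯+n_{r+s}, l = n_{r+s+1}+⋯+n_{r+s+t}. -/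
open Equiv

namespace ThirdOrderFree

variable {α : Type*}

section Aux

lemma finRotate_of_lt {m : ℕ} {j : Fin m} (h : (j : ℕ) + 1 < m) :
    finRotate m j = ⟨(j : ℕ) + 1, h⟩ := by
  rcases m with _ | m
  · omega
  · rw [finRotate_succ_apply]
    apply Fin.ext
    rw [Fin.val_add_one_of_lt (by rw [Fin.lt_iff_val_lt_val]; simp [Fin.last]; omega)]

lemma finRotate_of_last {m : ℕ} (hm : 0 < m) {j : Fin m} (h : (j : ℕ) = m - 1) :
    finRotate m j = ⟨0, hm⟩ := by
  rcases m with _ | m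
  · omega
  · have hj : j = Fin.last m := Fin.ext (by simp [Fin.last]; omega)
    subst hj
    rw [finRotate_succ_apply]
    apply Fin.ext
    simp [Fin.val_add, Fin.last, Fin.val_one']

variable {ι : Type*} (n : ι → ℕ) (hn : ∀ i, 0 < n i)

lemma blockRotate_apply (x : (i : ι) × Fin (n i)) :
    blockRotate n x = ⟨x.1, finRotate (n x.1) x.2⟩ := rfl

lemma mergePerm_apply_of_lt (π : Perm ι) {i : ι} {j : Fin (n i)} (h : (j : ℕ) + 1 < n i) :
    mergePerm n hn π ⟨i, j⟩ = ⟨i, ⟨(j : ℕ) + 1, h⟩⟩ := by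
  show (π.extendDomain (zeroSection n hn)) (blockRotate n ⟨i, j⟩) = _
  rw [blockRotate_apply]
  simp only []
  rw [show finRotate (n i) j = ⟨(j : ℕ) + 1, h⟩ from finRotate_of_lt h]
  exact Perm.extendDomain_apply_not_subtype _ _ (by simp)

lemma mergePerm_apply_last (π : Perm ι) {i : ι} {j : Fin (n i)} (h : (j : ℕ) = n i - 1) :
    mergePerm n hn π ⟨i, j⟩ = ⟨π i, ⟨0, hn (π i)⟩⟩ := by
  show (π.extendDomain (zeroSection n hn)) (blockRotate n ⟨i, j⟩) = _
  rw [blockRotate_apply]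
  simp only []
  rw [show finRotate (n i) j = ⟨0, hn i⟩ from finRotate_of_last (hn i) h]
  have h2 : (⟨i, ⟨0, hn i⟩⟩ : (i : ι) × Fin (n i)) = ((zeroSection n hn i : {x : (i : ι) × Fin (n i) // x.2.val = 0}) : (i : ι) × Fin (n i)) := rfl
  rw [h2, Perm.extendDomain_apply_image]
  rfl

lemma mergePerm_pow_zero (π : Perm ι) (i : ι) (k : ℕ) (h : k < n i) :
    ((mergePerm n hn π) ^ k) ⟨i, ⟨0, hn i⟩⟩ = ⟨i, ⟨k, h⟩⟩ := by
  induction k with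
  | zero => rfl
  | succ k ih =>
    rw [pow_succ', Perm.mul_apply, ih (by omega)]
    exact mergePerm_apply_of_lt n hn π h

lemma sameCycle_zero (π : Perm ι) (i : ι) (j : Fin (n i)) :
    (mergePerm n hn π).SameCycle ⟨i, ⟨0, hn i⟩⟩ ⟨i, j⟩ :=
  ⟨(j : ℕ), by rw [zpow_natCast, mergePerm_pow_zero n hn π i j j.isLt]⟩

lemma mergePerm_fst_sameCycle (π : Perm ι) (x : (i : ι) × Fin (n i)) :
    π.SameCycle x.1 ((mergePerm n hn π x).1) := by
  obtain ⟨i, j⟩ := x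
  by_cases h : (j : ℕ) + 1 < n i
  · rw [mergePerm_apply_of_lt n hn π h]
  · have h' : (j : ℕ) = n i - 1 := by have := j.isLt; omega
    rw [mergePerm_apply_last n hn π h']
    exact ⟨1, by simp⟩

lemma sameCycle_merge_of [Finite ι] (π : Perm ι) {i j : ι} (h : π.SameCycle i j) :
    (mergePerm n hn π).SameCycle ⟨i, ⟨0, hn i⟩⟩ ⟨j, ⟨0, hn j⟩⟩ := by
  obtain ⟨k, -, rfl⟩ := h.exists_pow_eq'
  clear h
  induction k with
  | zero => rfl
  | succ k ih =>
    have step : (mergePerm n hn π).SameCycle ⟨(π ^ k) i, ⟨0, hn _⟩⟩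
        ⟨π ((π ^ k) i), ⟨0, hn _⟩⟩ :=
      (sameCycle_zero n hn π _ ⟨n ((π ^ k) i) - 1, Nat.sub_lt (hn _) Nat.one_pos⟩).trans
        ⟨1, by rw [zpow_one, mergePerm_apply_last n hn π rfl]⟩
    have hh : (π ^ (k + 1)) i = π ((π ^ k) i) := by rw [pow_succ', Perm.mul_apply]
    rw [hh]
    exact ih.trans step

lemma sameCycle_fst [Finite ι] (π : Perm ι) {x y : (i : ι) × Fin (n i)}
    (h : (mergePerm n hn π).SameCycle x y) : π.SameCycle x.1 y.1 := by
  obtain ⟨k, -, rfl⟩ := h.exists_pow_eq'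
  clear h
  induction k with
  | zero => rfl
  | succ k ih =>
    have hh : ((mergePerm n hn π) ^ (k + 1)) x = mergePerm n hn π (((mergePerm n hn π) ^ k) x) := by
      rw [pow_succ', Perm.mul_apply]
    rw [hh]
    exact ih.trans (mergePerm_fst_sameCycle n hn π _)

lemma numCycles_mergePerm [Finite ι] (π : Perm ι) :
    numCycles π = numCycles (mergePerm n hn π) := by
  unfold numCycles
  apply Nat.card_congr
  refine
    { toFun := Quotient.lift
        (fun i => Quotient.mk (sameCycleSetoid (mergePerm n hn π)) ⟨i, ⟨0, hn i⟩⟩)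
        (fun a b h => Quotient.sound (sameCycle_merge_of n hn π h))
      invFun := Quotient.lift (fun x => Quotient.mk (sameCycleSetoid π) x.1)
        (fun a b h => Quotient.sound (sameCycle_fst n hn π h))
      left_inv := Quotient.ind fun i => rfl
      right_inv := Quotient.ind fun x => ?_ }
  obtain ⟨i, j⟩ := x
  exact Quotient.sound (sameCycle_zero n hn π i j)

end Aux


section Aux2

variable {β : Type*} {p : β → Prop} [DecidablePred p] (f : α ≃ Subtype p)

lemma sameCycle_extendDomain_image (e : Perm α) {i j : α} :
    (e.extendDomain f).SameCycle ((f i : β)) ((f j : β)) ↔ e.SameCycle i j := by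
  constructor
  · rintro ⟨k, hk⟩
    refine ⟨k, ?_⟩
    rw [← Perm.extendDomain_zpow, Perm.extendDomain_apply_image] at hk
    exact f.injective (Subtype.coe_injective hk)
  · rintro ⟨k, hk⟩
    exact ⟨k, by rw [← Perm.extendDomain_zpow, Perm.extendDomain_apply_image, hk]⟩

lemma sameCycle_extendDomain_not (e : Perm α) {x y : β} (hx : ¬ p x)
    (h : (e.extendDomain f).SameCycle x y) : y = x := by
  obtain ⟨k, hk⟩ := h
  rw [← hk, ← Perm.extendDomain_zpow, Perm.extendDomain_apply_not_subtype _ _ hx]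

lemma numCycles_extendDomain [Finite α] [Finite β] (e : Perm α) :
    numCycles (e.extendDomain f) + Nat.card α = numCycles e + Nat.card β := by
  have hwell : ∀ a b : β, (sameCycleSetoid (e.extendDomain f)).r a b →
      (if h : p a then Sum.inl (Quotient.mk (sameCycleSetoid e) (f.symm ⟨a, h⟩))
        else Sum.inr (⟨a, h⟩ : {x : β // ¬ p x})) =
      (if h : p b then Sum.inl (Quotient.mk (sameCycleSetoid e) (f.symm ⟨b, h⟩))
        else Sum.inr ⟨b, h⟩) := by
    intro a b hab
    by_cases ha : p a
    · have hb : p b := by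
        by_contra hb
        have := sameCycle_extendDomain_not f e hb hab.symm
        exact hb (this ▸ ha)
      rw [dif_pos ha, dif_pos hb]
      refine congrArg Sum.inl (Quotient.sound ?_)
      refine (sameCycle_extendDomain_image f e).mp ?_
      have h1 : ((f (f.symm ⟨a, ha⟩) : Subtype p) : β) = a := by
        rw [f.apply_symm_apply]
      have h2 : ((f (f.symm ⟨b, hb⟩) : Subtype p) : β) = b := by
        rw [f.apply_symm_apply]
      rw [h1, h2]
      exact hab
    · have : b = a := sameCycle_extendDomain_not f e ha hab
      subst this; rfl
  have E : Quotient (sameCycleSetoid (e.extendDomain f)) ≃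
      Quotient (sameCycleSetoid e) ⊕ {x : β // ¬ p x} :=
    { toFun := Quotient.lift _ hwell
      invFun := Sum.elim
        (Quotient.lift (fun i => Quotient.mk (sameCycleSetoid (e.extendDomain f)) (f i : β))
          (fun a b h => Quotient.sound ((sameCycle_extendDomain_image f e).mpr h)))
        (fun x => Quotient.mk (sameCycleSetoid (e.extendDomain f)) x.1)
      left_inv := by
        refine Quotient.ind fun x => ?_
        by_cases h : p x
        · show Sum.elim _ _ (dite _ _ _) = _
          rw [dif_pos h]
          show Quotient.mk _ ((f (f.symm ⟨x, h⟩) : Subtype p) : β) = _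
          rw [f.apply_symm_apply]
        · show Sum.elim _ _ (dite _ _ _) = _
          rw [dif_neg h]
          rfl
      right_inv := by
        rintro (q | x)
        · induction q using Quotient.ind with
          | _ i =>
            show dite _ _ _ = _
            rw [dif_pos (f i).2]
            refine congrArg Sum.inl (congrArg _ ?_)
            have : (⟨((f i : Subtype p) : β), (f i).2⟩ : Subtype p) = f i := Subtype.ext rfl
            rw [this, f.symm_apply_apply]
        · show dite _ _ _ = _
          rw [dif_neg x.2] }
  have hcard : Nat.card (Quotient (sameCycleSetoid (e.extendDomain f))) =
      numCycles e + Nat.card {x : β // ¬ p x} := by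
    rw [Nat.card_congr E, Nat.card_sum]; rfl
  have hβ : Nat.card β = Nat.card α + Nat.card {x : β // ¬ p x} := by
    rw [← Nat.card_congr (Equiv.sumCompl p), Nat.card_sum, Nat.card_congr f.symm]
  show Nat.card (Quotient (sameCycleSetoid (e.extendDomain f))) + _ = _
  omega

lemma numCycles_conj_s11 (g σ : Perm α) : numCycles (g⁻¹ * σ * g) = numCycles σ := by
  unfold numCycles
  apply Nat.card_congr
  refine Quotient.congr (g : α ≃ α) fun a b => ?_
  show (g⁻¹ * σ * g).SameCycle a b ↔ σ.SameCycle (g a) (g b)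
  have := Perm.sameCycle_conj (g := g⁻¹) (f := σ) (x := a) (y := b)
  simpa only [inv_inv] using this

end Aux2

section Aux3

variable {ι : Type*} (n : ι → ℕ) (hn : ∀ i, 0 < n i)

lemma mergePerm_inv_mul (π γ : Perm ι) :
    (mergePerm n hn π)⁻¹ * mergePerm n hn γ =
      (blockRotate n)⁻¹ * ((π⁻¹ * γ).extendDomain (zeroSection n hn)) * blockRotate n := by
  unfold mergePerm
  simp only [mul_inv_rev, Perm.extendDomain_inv, mul_assoc]
  rw [← mul_assoc (π⁻¹.extendDomain (zeroSection n hn)), Perm.extendDomain_mul]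

lemma numCycles_mergePerm_inv_mul [Finite ι] (π γ : Perm ι) :
    numCycles (π⁻¹ * γ) + Nat.card ((i : ι) × Fin (n i)) =
      numCycles ((mergePerm n hn π)⁻¹ * mergePerm n hn γ) + Nat.card ι := by
  rw [mergePerm_inv_mul, numCycles_conj_s11]
  have := numCycles_extendDomain (zeroSection n hn) (π⁻¹ * γ)
  omega

lemma joinTop_merge [Finite ι] (π γ : Perm ι) (h : JoinTop π γ) :
    JoinTop (mergePerm n hn π) (mergePerm n hn γ) := by
  intro x y
  set J := joinSetoid (mergePerm n hn π) (mergePerm n hn γ) with hJdef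
  have hπ : ∀ a b, (mergePerm n hn π).SameCycle a b → J.r a b := fun a b hab =>
    (le_sup_left : sameCycleSetoid (mergePerm n hn π) ≤ J) hab
  have hγ : ∀ a b, (mergePerm n hn γ).SameCycle a b → J.r a b := fun a b hab =>
    (le_sup_right : sameCycleSetoid (mergePerm n hn γ) ≤ J) hab
  have key : ∀ i j : ι, J.r ⟨i, ⟨0, hn i⟩⟩ ⟨j, ⟨0, hn j⟩⟩ := by
    intro i j
    have hij := h i j
    have hsup : joinSetoid π γ =
        Relation.EqvGen.setoid (fun a b : ι => (sameCycleSetoid π) a b ∨ (sameCycleSetoid γ) a b) :=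
      Setoid.sup_eq_eqvGen _ _
    rw [JoinTop] at h
    have hij' : Relation.EqvGen (fun a b : ι => π.SameCycle a b ∨ γ.SameCycle a b) i j := by
      rw [hsup] at hij
      exact hij
    clear hij
    induction hij' with
    | rel a b hab =>
      rcases hab with h1 | h1
      · exact hπ _ _ (sameCycle_merge_of n hn π h1)
      · exact hγ _ _ (sameCycle_merge_of n hn γ h1)
    | refl a => exact J.refl' _
    | symm a b _ ih => exact J.symm' ih
    | trans a b c _ _ ih1 ih2 => exact J.trans' ih1 ih2
  obtain ⟨i, a⟩ := x; obtain ⟨j, b⟩ := y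
  have h1 : J.r ⟨i, a⟩ ⟨i, ⟨0, hn i⟩⟩ := J.symm' (hπ _ _ (sameCycle_zero n hn π i a))
  have h3 : J.r ⟨j, ⟨0, hn j⟩⟩ ⟨j, b⟩ := hπ _ _ (sameCycle_zero n hn π j b)
  exact J.trans' (J.trans' h1 (key i j)) h3

end Aux3

/-- basic properties of `π ↦ π_{\vec n}`. Here `W` encodes
`[r+s+t]` (three groups of sizes `r, s, t`), `γ_{r,s,t} = blockRotate ![r,s,t]`,
`γ = blockRotate n` has the cycles `T i`, `π_{\vec n} = mergePerm n hn π`, and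
`γ_{p,q,l} = mergePerm n hn γ_{r,s,t}`; `ψ i = n₁ + ⋯ + n_i` is the last element
of the block `T i`. -/
theorem stmt11 (r s t : ℕ) (n : ((i : Fin 3) × Fin (![r, s, t] i)) → ℕ)
    (hn : ∀ x, 0 < n x)
    (γrst : Equiv.Perm ((i : Fin 3) × Fin (![r, s, t] i)))
    (hγrst : γrst = blockRotate ![r, s, t])
    (ψ : ((i : Fin 3) × Fin (![r, s, t] i)) →
      ((x : (i : Fin 3) × Fin (![r, s, t] i)) × Fin (n x)))
    (hψ : ∀ x, ψ x = ⟨x, ⟨n x - 1, Nat.sub_lt (hn x) Nat.one_pos⟩⟩)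
    (π : Equiv.Perm ((i : Fin 3) × Fin (![r, s, t] i))) :
    (∀ x, ψ ((π⁻¹ * γrst) x) = ((mergePerm n hn π)⁻¹ * mergePerm n hn γrst) (ψ x)) ∧
    numCycles π = numCycles (mergePerm n hn π) ∧
    numCycles (π⁻¹ * γrst) +
        Nat.card ((x : (i : Fin 3) × Fin (![r, s, t] i)) × Fin (n x)) =
      numCycles ((mergePerm n hn π)⁻¹ * mergePerm n hn γrst) +
        Nat.card ((i : Fin 3) × Fin (![r, s, t] i)) ∧
    (SNC γrst π → SNC (mergePerm n hn γrst) (mergePerm n hn π)) := by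
  refine ⟨?_, numCycles_mergePerm n hn π, numCycles_mergePerm_inv_mul n hn π γrst, ?_⟩
  · intro x
    rw [hψ, hψ, Perm.mul_apply, Perm.mul_apply]
    rw [mergePerm_apply_last n hn γrst rfl]
    rw [Perm.eq_inv_iff_eq]
    rw [mergePerm_apply_last n hn π rfl, ← Perm.mul_apply π π⁻¹, mul_inv_cancel, Perm.one_apply]
  · rintro ⟨hJ, hc⟩
    refine ⟨joinTop_merge n hn π γrst hJ, ?_⟩
    have e2π := numCycles_mergePerm n hn π
    have e2γ := numCycles_mergePerm n hn γrst
    have e3 := numCycles_mergePerm_inv_mul n hn π γrst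
    omega

end ThirdOrderFree
end

section
/- Let n = 2r₁+⋯+2r_m, γ = γ_{2r₁,…,2r_m}, and O the set of odd numbers in [n]. The half map π ↦ π̌, defined by π̌(k) = π(π(2k))/2, is a bijection from the set {π ∈ S_n : π is parity reversing and γπ⁻¹ separates the points of O} onto S_{r₁+⋯+r_m}. Its inverse sends σ ∈ S_{r₁+⋯+r_m} to the double σ̂ defined by σ̂(2k) = γ(2k) and σ̂(γ(2k)) = 2σ(k). -/
open Equiv

namespace ThirdOrderFree

variable {α : Type*}

/-! ### Auxiliary machinery for Statement 15 -/

private lemma finRotate_val' {n : ℕ} (k : Fin n) :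
    ((finRotate n k : Fin n) : ℕ) = (k.val + 1) % n := by
  cases n with
  | zero => exact k.elim0
  | succ n =>
    rw [finRotate_succ_apply, Fin.add_def, Fin.val_one']
    conv_rhs => rw [Nat.add_mod, Nat.mod_eq_of_lt k.isLt]

private def blkFun (n : ℕ) : Fin n ⊕ Fin n → Fin (2 * n)
  | Sum.inl j => ⟨2 * j.val + 1, by have := j.isLt; omega⟩
  | Sum.inr j => ⟨(2 * j.val + 2) % (2 * n), Nat.mod_lt _ (by have := j.isLt; omega)⟩

private lemma blk_mod (n j : ℕ) (hj : j < n) :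
    (2 * j + 2) % (2 * n) = if j + 1 = n then 0 else 2 * j + 2 := by
  rcases Nat.lt_or_ge (j + 1) n with h | h
  · rw [Nat.mod_eq_of_lt (by omega), if_neg (by omega)]
  · have h2 : 2 * j + 2 = 2 * n := by omega
    rw [h2, Nat.mod_self, if_pos (by omega)]

private lemma blkFun_bij (n : ℕ) : Function.Bijective (blkFun n) := by
  constructor
  · rintro (a | a) (b | b) h <;> simp only [blkFun, Fin.mk.injEq] at h
    · exact congrArg Sum.inl (Fin.ext (by omega))
    · rw [blk_mod n b.val b.isLt] at h
      split at h <;> omega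
    · rw [blk_mod n a.val a.isLt] at h
      split at h <;> omega
    · rw [blk_mod n a.val a.isLt, blk_mod n b.val b.isLt] at h
      refine congrArg Sum.inr (Fin.ext ?_)
      have ha := a.isLt; have hb := b.isLt
      split at h <;> split at h <;> omega
  · intro k
    have hk := k.isLt
    have hn : 0 < n := by omega
    rcases Nat.even_or_odd k.val with he | ho
    · obtain ⟨j, hj⟩ := he
      rcases Nat.eq_zero_or_pos k.val with h0 | hpos
      · refine ⟨Sum.inr ⟨n - 1, by omega⟩, Fin.ext ?_⟩
        show (2 * (n - 1) + 2) % (2 * n) = k.val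
        have h2 : 2 * (n - 1) + 2 = 2 * n := by omega
        rw [h2, Nat.mod_self, h0]
      · refine ⟨Sum.inr ⟨j - 1, by omega⟩, Fin.ext ?_⟩
        show (2 * (j - 1) + 2) % (2 * n) = k.val
        rw [Nat.mod_eq_of_lt (by omega)]
        omega
    · obtain ⟨j, hj⟩ := ho
      refine ⟨Sum.inl ⟨j, by omega⟩, Fin.ext ?_⟩
      show 2 * j + 1 = k.val
      omega

private noncomputable def blkEquiv (n : ℕ) : Fin n ⊕ Fin n ≃ Fin (2 * n) :=
  Equiv.ofBijective _ (blkFun_bij n)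

private noncomputable def EE (m : ℕ) (r : Fin m → ℕ) :
    ((i : Fin m) × Fin (r i)) ⊕ ((i : Fin m) × Fin (r i)) ≃ ((i : Fin m) × Fin (2 * r i)) :=
  (Equiv.sigmaSumDistrib _ _).symm.trans (Equiv.sigmaCongrRight fun i => blkEquiv (r i))

private lemma sigma_ext {m : ℕ} {n : Fin m → ℕ} {x y : (i : Fin m) × Fin (n i)}
    (h1 : x.1 = y.1) (h2 : (x.2 : ℕ) = (y.2 : ℕ)) : x = y := by
  obtain ⟨i, k⟩ := x; obtain ⟨j, l⟩ := y
  cases h1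
  exact congrArg _ (Fin.ext h2)

private lemma EE_inl {m : ℕ} {r : Fin m → ℕ} (u : (i : Fin m) × Fin (r i)) :
    EE m r (Sum.inl u) = ⟨u.1, ⟨2 * u.2.val + 1, by have h := u.2.isLt; linarith⟩⟩ := by
  obtain ⟨i, j⟩ := u
  rfl

private lemma EE_inr {m : ℕ} {r : Fin m → ℕ} (u : (i : Fin m) × Fin (r i)) :
    EE m r (Sum.inr u) =
      ⟨u.1, ⟨(2 * u.2.val + 2) % (2 * r u.1),
        Nat.mod_lt _ (by have := u.2.isLt; omega)⟩⟩ := by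
  obtain ⟨i, j⟩ := u
  rfl

/-- the half map is a bijection from parity-reversing permutations `π`
with `γπ⁻¹` separating the odds onto `S_{r₁+⋯+r_m}`: for each `σ` there is a unique
such `π` with half `σ`, and it is the double `σ̂`, i.e. `π(2k) = γ(2k)` and
`π(γ(2k)) = 2σ(k)`. -/
theorem stmt15 (m : ℕ) (r : Fin m → ℕ)
    (γ : Equiv.Perm ((i : Fin m) × Fin (2 * r i)))
    (hγ : γ = blockRotate (fun i => 2 * r i))
    (dbl : ((i : Fin m) × Fin (r i)) → ((i : Fin m) × Fin (2 * r i)))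
    (hdbl : ∀ x, dbl x = ⟨x.1, ⟨2 * x.2.val + 1, by have := x.2.isLt; omega⟩⟩) :
    ∀ σ : Equiv.Perm ((i : Fin m) × Fin (r i)),
      (∃! π : Equiv.Perm ((i : Fin m) × Fin (2 * r i)),
        (∀ x, (π x).2.val % 2 ≠ x.2.val % 2) ∧
        Separates (γ * π⁻¹) {x | x.2.val % 2 = 0} ∧
        ∀ u, π (π (dbl u)) = dbl (σ u)) ∧
      ∀ π : Equiv.Perm ((i : Fin m) × Fin (2 * r i)),
        ((∀ x, (π x).2.val % 2 ≠ x.2.val % 2) ∧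
          Separates (γ * π⁻¹) {x | x.2.val % 2 = 0} ∧
          ∀ u, π (π (dbl u)) = dbl (σ u)) →
        (∀ x : (i : Fin m) × Fin (2 * r i), x.2.val % 2 = 1 → π x = γ x) ∧
        ∀ u, π (γ (dbl u)) = dbl (σ u) := by
  intro σ
  classical
  -- basic facts about γ
  have hγ1 : ∀ x : (i : Fin m) × Fin (2 * r i), (γ x).1 = x.1 := by
    intro x; rw [hγ]; rfl
  have hγv : ∀ x : (i : Fin m) × Fin (2 * r i),
      ((γ x).2 : ℕ) = (x.2.val + 1) % (2 * r x.1) := by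
    intro x
    obtain ⟨i, k⟩ := x
    rw [hγ]
    exact finRotate_val' k
  have hγflip : ∀ x : (i : Fin m) × Fin (2 * r i),
      ((γ x).2 : ℕ) % 2 ≠ x.2.val % 2 := by
    intro x
    rw [hγv x]
    have hk := x.2.isLt
    rcases Nat.lt_or_ge (x.2.val + 1) (2 * r x.1) with h | h
    · rw [Nat.mod_eq_of_lt h]; omega
    · have h2 : x.2.val + 1 = 2 * r x.1 := by omega
      rw [h2, Nat.mod_self]; omega
  -- the splitting equivalence
  have hEl : ∀ u, EE m r (Sum.inl u) = dbl u := by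
    intro u
    rw [hdbl, EE_inl]
  have hEr : ∀ u, EE m r (Sum.inr u) = γ (dbl u) := by
    intro u
    rw [EE_inr]
    refine (sigma_ext ?_ ?_).symm
    · rw [hγ1, hdbl]
    · rw [hγv, hdbl]
  -- parity of the two kinds of points
  have hpar_dbl : ∀ u, (dbl u).2.val % 2 = 1 := by
    intro u
    rw [hdbl]
    show (2 * u.2.val + 1) % 2 = 1
    omega
  have hpar_gdbl : ∀ u, (γ (dbl u)).2.val % 2 = 0 := by
    intro u
    have := hγflip (dbl u)
    have := hpar_dbl u
    omega
  -- decomposition of an arbitrary point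
  have hdec : ∀ x : (i : Fin m) × Fin (2 * r i),
      (∃ u, x = dbl u) ∨ ∃ u, x = γ (dbl u) := by
    intro x
    obtain ⟨z, hz⟩ := (EE m r).surjective x
    rcases z with u | u
    · exact Or.inl ⟨u, by rw [← hz, hEl]⟩
    · exact Or.inr ⟨u, by rw [← hz, hEr]⟩
  have hdec0 : ∀ x : (i : Fin m) × Fin (2 * r i),
      x.2.val % 2 = 0 → ∃ u, x = γ (dbl u) := by
    intro x hx
    rcases hdec x with ⟨u, hu⟩ | h
    · exfalso; rw [hu] at hx; have := hpar_dbl u; omega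
    · exact h
  have hdec1 : ∀ x : (i : Fin m) × Fin (2 * r i),
      x.2.val % 2 = 1 → ∃ u, x = dbl u := by
    intro x hx
    rcases hdec x with h | ⟨u, hu⟩
    · exact h
    · exfalso; rw [hu] at hx; have := hpar_gdbl u; omega
  -- the key consequence of separation: π agrees with γ on odd points
  have key : ∀ π : Equiv.Perm ((i : Fin m) × Fin (2 * r i)),
      (∀ x, (π x).2.val % 2 ≠ x.2.val % 2) →
      Separates (γ * π⁻¹) {x | x.2.val % 2 = 0} →
      ∀ u, π (dbl u) = γ (dbl u) := by
    intro π h1 h2 u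
    set τ : Equiv.Perm ((i : Fin m) × Fin (2 * r i)) := γ * π⁻¹ with hτ
    set y : (i : Fin m) × Fin (2 * r i) := γ (dbl u) with hy
    have hy0 : y.2.val % 2 = 0 := hpar_gdbl u
    have hπy : (π⁻¹ y).2.val % 2 = 1 := by
      have h := h1 (π⁻¹ y)
      rw [(Equiv.Perm.eq_inv_iff_eq (f := π) (x := π⁻¹ y) (y := y)).mp rfl] at h
      omega
    have hτy0 : (τ y).2.val % 2 = 0 := by
      have h := hγflip (π⁻¹ y)
      have hτy : τ y = γ (π⁻¹ y) := rfl
      rw [hτy]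
      omega
    have hfix : τ y = y := by
      refine h2 (τ y) hτy0 y hy0 ⟨-1, ?_⟩
      simp
    have hinv : π⁻¹ y = γ⁻¹ y := by
      have : γ (π⁻¹ y) = γ (γ⁻¹ y) := by
        rw [(Equiv.Perm.eq_inv_iff_eq (f := γ) (x := γ⁻¹ y) (y := y)).mp rfl]
        exact hfix
      exact γ.injective this
    have : π⁻¹ (γ (dbl u)) = dbl u := by
      rw [← hy, hinv, hy, (Equiv.Perm.inv_eq_iff_eq (f := γ) (x := γ (dbl u)) (y := dbl u)).mpr rfl]
    calc π (dbl u) = π (π⁻¹ (γ (dbl u))) := by rw [this]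
      _ = γ (dbl u) := Equiv.apply_symm_apply π _
  -- construction of the candidate permutation
  set f : Equiv.Perm (((i : Fin m) × Fin (r i)) ⊕ ((i : Fin m) × Fin (r i))) :=
    (Equiv.sumCongr (Equiv.refl _) σ).trans (Equiv.sumComm _ _) with hf
  set π₀ : Equiv.Perm ((i : Fin m) × Fin (2 * r i)) := (EE m r).permCongr f with hπ₀
  have hπ₀app : ∀ z, π₀ (EE m r z) = EE m r (f z) := by
    intro z
    rw [hπ₀, Equiv.permCongr_apply, Equiv.symm_apply_apply]
  have hfl : ∀ u, f (Sum.inl u) = Sum.inr u := fun u => rfl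
  have hfr : ∀ u, f (Sum.inr u) = Sum.inl (σ u) := fun u => rfl
  have hπ₀l : ∀ u, π₀ (dbl u) = γ (dbl u) := by
    intro u
    have h := hπ₀app (Sum.inl u)
    rw [hfl u, hEl u, hEr u] at h
    exact h
  have hπ₀r : ∀ u, π₀ (γ (dbl u)) = dbl (σ u) := by
    intro u
    have h := hπ₀app (Sum.inr u)
    rw [hfr u, hEr u, hEl (σ u)] at h
    exact h
  -- π₀ satisfies the three conditions
  have hc1 : ∀ x, (π₀ x).2.val % 2 ≠ x.2.val % 2 := by
    intro x
    rcases hdec x with ⟨u, hu⟩ | ⟨u, hu⟩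
    · rw [hu, hπ₀l]
      have := hpar_dbl u; have := hpar_gdbl u; omega
    · rw [hu, hπ₀r]
      have := hpar_dbl (σ u); have := hpar_gdbl u; omega
  have hc2 : Separates (γ * π₀⁻¹) {x | x.2.val % 2 = 0} := by
    have hfixall : ∀ x : (i : Fin m) × Fin (2 * r i), x.2.val % 2 = 0 →
        (γ * π₀⁻¹) x = x := by
      intro x hx
      obtain ⟨u, hu⟩ := hdec0 x hx
      have hinv : π₀⁻¹ x = dbl u := by
        rw [hu, ← hπ₀l, (Equiv.Perm.inv_eq_iff_eq (f := π₀) (x := π₀ (dbl u)) (y := dbl u)).mpr rfl]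
      show γ (π₀⁻¹ x) = x
      rw [hinv, hu]
    intro x hx y hy hxy
    obtain ⟨i, hi⟩ := hxy
    have := Equiv.Perm.zpow_apply_eq_self_of_apply_eq_self (hfixall x hx) i
    rw [hi] at this
    exact this.symm
  have hc3 : ∀ u, π₀ (π₀ (dbl u)) = dbl (σ u) := by
    intro u
    rw [hπ₀l, hπ₀r]
  refine ⟨⟨π₀, ⟨hc1, hc2, hc3⟩, ?_⟩, ?_⟩
  · -- uniqueness
    rintro π ⟨h1, h2, h3⟩
    apply Equiv.ext
    intro x
    rcases hdec x with ⟨u, hu⟩ | ⟨u, hu⟩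
    · rw [hu, key π h1 h2 u, hπ₀l]
    · rw [hu, hπ₀r, ← key π h1 h2 u, h3]
  · -- consequence for every solution
    rintro π ⟨h1, h2, h3⟩
    constructor
    · intro x hx
      obtain ⟨u, hu⟩ := hdec1 x hx
      rw [hu, key π h1 h2 u]
    · intro u
      rw [← key π h1 h2 u, h3]

end ThirdOrderFree
end
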